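/- arXiv:2211.01436 — 3 statements merged into one kernel-verified Lean document; each statement's English description precedes it below -/
import Mathlib

section
/- For every integer a ≥ 2, the genus of S(a), i.e. the cardinality of ℕ \ S(a), equals Σ_{x=1}^{l_a − 1} β(x). -/
/-- The Lucas sequence: l 0 = 2, l 1 = 1, l (n+2) = l (n+1) + l n. -/
def lucas : ℕ → ℕ
  | 0 => 2
  | 1 => 1
  | n + 2 => lucas (n + 1) + lucas n

/-- The modified (monotone) Lucas sequence: l̃ 0 = 1, l̃ 1 = 2, l̃ n = l n for n ≥ 2. -/
def ltil : ℕ → ℕ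
  | 0 => 1
  | 1 => 2
  | n + 2 => lucas (n + 2)

/-- β x : minimal number of summands in a representation of x as a sum of
modified Lucas numbers (with repetitions allowed). -/
noncomputable def beta (x : ℕ) : ℕ :=
  sInf {s : ℕ | ∃ k : ℕ, ∃ b : ℕ → ℕ,
    x = ∑ i ∈ Finset.range (k + 1), b i * ltil i ∧ s = ∑ i ∈ Finset.range (k + 1), b i}

/-- γ x : the greatest k with l̃ k ≤ x (for x ≥ 1). -/
noncomputable def gamma (x : ℕ) : ℕ := sSup {k : ℕ | ltil k ≤ x}

/-- S a : the additive submonoid of ℕ generated by {l_a} ∪ {l_a + l_n : n ∈ ℕ}. -/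
def Sset (a : ℕ) : AddSubmonoid ℕ :=
  AddSubmonoid.closure ({lucas a} ∪ {x : ℕ | ∃ n : ℕ, x = lucas a + lucas n})

/-- T a : the additive submonoid of ℕ generated by {l_a + l_n : n ∈ ℕ}. -/
def Tset (a : ℕ) : AddSubmonoid ℕ :=
  AddSubmonoid.closure {x : ℕ | ∃ n : ℕ, x = lucas a + lucas n}

lemma lucas_add_two (n : ℕ) : lucas (n+2) = lucas (n+1) + lucas n := rfl

lemma lucas_pos : ∀ n, 0 < lucas n
  | 0 => by decide
  | 1 => by decide
  | n + 2 => by rw [lucas_add_two]; exact Nat.add_pos_left (lucas_pos (n+1)) _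

lemma ltil_add_two (n : ℕ) : ltil (n+2) = lucas (n+2) := rfl

lemma ltil_pos : ∀ n, 0 < ltil n
  | 0 => by decide
  | 1 => by decide
  | n + 2 => lucas_pos (n+2)

lemma ltil_of_two_le {n : ℕ} (h : 2 ≤ n) : ltil n = lucas n := by
  obtain ⟨m, rfl⟩ := Nat.exists_eq_add_of_le h
  rw [Nat.add_comm]; rfl

lemma ltil_rec : ∀ n, n ≠ 1 → ltil (n+2) = ltil (n+1) + ltil n
  | 0, _ => by decide
  | 1, h => absurd rfl h
  | n + 2, _ => by
    rw [ltil_of_two_le (by omega : 2 ≤ n+2+2), ltil_of_two_le (by omega : 2 ≤ n+2+1),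
      ltil_of_two_le (by omega : 2 ≤ n+2)]
    exact lucas_add_two (n+2)

lemma ltil_strictMono : StrictMono ltil := by
  have h : ∀ n, ltil n < ltil (n+1) := by
    intro n
    match n with
    | 0 => decide
    | 1 => decide
    | 2 => decide
    | n + 3 =>
      rw [ltil_of_two_le (by omega : 2 ≤ n+3), ltil_of_two_le (by omega : 2 ≤ n+3+1)]
      have h1 : lucas (n+3+1) = lucas (n+3) + lucas (n+2) := lucas_add_two (n+2)
      have := lucas_pos (n+2)
      omega
  exact strictMono_nat_of_lt_succ h

lemma ltil_two_le {n : ℕ} (h : 1 ≤ n) : 2 ≤ ltil n := by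
  calc 2 = ltil 1 := rfl
  _ ≤ ltil n := ltil_strictMono.monotone h

-- beta basics
lemma beta_set_nonempty (x : ℕ) : {s : ℕ | ∃ k : ℕ, ∃ b : ℕ → ℕ,
    x = ∑ i ∈ Finset.range (k + 1), b i * ltil i ∧ s = ∑ i ∈ Finset.range (k + 1), b i}.Nonempty := by
  refine ⟨x, 0, fun _ => x, ?_, ?_⟩ <;> simp [ltil]

lemma beta_le_of_rep {x k : ℕ} {b : ℕ → ℕ} (h : x = ∑ i ∈ Finset.range (k + 1), b i * ltil i) :
    beta x ≤ ∑ i ∈ Finset.range (k + 1), b i :=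
  Nat.sInf_le ⟨k, b, h, rfl⟩

lemma exists_beta_rep (x : ℕ) : ∃ k : ℕ, ∃ b : ℕ → ℕ,
    x = ∑ i ∈ Finset.range (k + 1), b i * ltil i ∧ beta x = ∑ i ∈ Finset.range (k + 1), b i :=
  Nat.sInf_mem (beta_set_nonempty x)

lemma beta_zero : beta 0 = 0 := by
  have := beta_le_of_rep (x := 0) (k := 0) (b := fun _ => 0) (by simp)
  simpa using this

lemma rep_pad {x k K : ℕ} {b : ℕ → ℕ} (hk : k ≤ K)
    (h : x = ∑ i ∈ Finset.range (k + 1), b i * ltil i) :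
    x = ∑ i ∈ Finset.range (K + 1), (fun i => if i < k + 1 then b i else 0) i * ltil i ∧
    ∑ i ∈ Finset.range (k + 1), b i = ∑ i ∈ Finset.range (K + 1), (fun i => if i < k + 1 then b i else 0) i := by
  have hsub : Finset.range (k+1) ⊆ Finset.range (K+1) := Finset.range_subset_range.2 (by omega)
  constructor
  · rw [h]
    rw [← Finset.sum_subset hsub (fun i _ hi => by
      simp only [Finset.mem_range, not_lt] at hi
      simp [Nat.not_lt.2 hi])]
    exact Finset.sum_congr rfl (fun i hi => by simp [Finset.mem_range.1 hi])
  · rw [← Finset.sum_subset hsub (fun i _ hi => by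
      simp only [Finset.mem_range, not_lt] at hi
      simp [Nat.not_lt.2 hi])]
    exact Finset.sum_congr rfl (fun i hi => by simp [Finset.mem_range.1 hi])

lemma beta_add_le (x y : ℕ) : beta (x + y) ≤ beta x + beta y := by
  obtain ⟨k1, b1, hx, hbx⟩ := exists_beta_rep x
  obtain ⟨k2, b2, hy, hby⟩ := exists_beta_rep y
  set K := max k1 k2 with hK
  obtain ⟨hx', hbx'⟩ := rep_pad (le_max_left k1 k2) hx
  obtain ⟨hy', hby'⟩ := rep_pad (le_max_right k1 k2) hy
  have hrep : x + y = ∑ i ∈ Finset.range (K + 1),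
      ((fun i => if i < k1 + 1 then b1 i else 0) i + (fun i => if i < k2 + 1 then b2 i else 0) i) * ltil i := by
    rw [hx', hy', ← Finset.sum_add_distrib]
    exact Finset.sum_congr rfl (fun i _ => by ring)
  have := beta_le_of_rep hrep
  rw [Finset.sum_add_distrib] at this
  rw [hbx, hby, hbx', hby']
  exact this

lemma beta_ltil_le (m : ℕ) : beta (ltil m) ≤ 1 := by
  have h : ltil m = ∑ i ∈ Finset.range (m + 1), (fun i => if i = m then 1 else 0) i * ltil i := by
    rw [Finset.sum_eq_single m]
    · simp
    · intro i _ hi; simp [hi]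
    · intro h; exact absurd (Finset.self_mem_range_succ m) h
  have := beta_le_of_rep h
  calc beta (ltil m) ≤ ∑ i ∈ Finset.range (m+1), (fun i => if i = m then 1 else 0) i := this
  _ = 1 := by rw [Finset.sum_eq_single m] <;> simp +contextual

lemma beta_list_le (L : List ℕ) : beta ((L.map ltil).sum) ≤ L.length := by
  induction L with
  | nil => simpa using beta_zero.le
  | cons x xs ih =>
    simp only [List.map_cons, List.sum_cons, List.length_cons]
    calc beta (ltil x + (xs.map ltil).sum) ≤ beta (ltil x) + beta ((xs.map ltil).sum) := beta_add_le _ _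
    _ ≤ 1 + xs.length := Nat.add_le_add (beta_ltil_le x) ih
    _ = xs.length + 1 := by omega

lemma beta_pos {x : ℕ} (hx : 0 < x) : 0 < beta x := by
  rcases Nat.eq_zero_or_pos (beta x) with h | h
  · obtain ⟨k, b, hrep, hb⟩ := exists_beta_rep x
    rw [h] at hb
    have : ∀ i ∈ Finset.range (k+1), b i = 0 := by
      intro i hi
      have := Finset.sum_eq_zero_iff.1 hb.symm
      exact this i hi
    rw [hrep] at hx
    rw [Finset.sum_eq_zero (fun i hi => by rw [this i hi]; ring)] at hx
    exact absurd hx (lt_irrefl 0)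
  · exact h

lemma lucas_fib : ∀ s a, 1 ≤ a → lucas (a + s) = Nat.fib (s+1) * lucas a + Nat.fib s * lucas (a-1)
  | 0, a, ha => by simp
  | 1, a, ha => by
    obtain ⟨b, rfl⟩ := Nat.exists_eq_add_of_le ha
    have h : lucas (1 + b + 1) = lucas (b + 1) + lucas b := by
      have := lucas_add_two b
      convert this using 2 <;> omega
    rw [h]
    have : 1 + b - 1 = b := by omega
    rw [this]
    have : lucas (1 + b) = lucas (b + 1) := by rw [Nat.add_comm]
    rw [this]
    simp [Nat.fib_add_two]
  | s+2, a, ha => by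
    have h1 := lucas_fib (s+1) a ha
    have h2 := lucas_fib s a ha
    have h3 : lucas (a + (s+2)) = lucas (a + (s+1)) + lucas (a + s) := by
      have := lucas_add_two (a + s)
      rw [show a + (s+2) = a + s + 2 by omega, show a + (s+1) = a + s + 1 by omega]; exact this
    rw [h3, h1, h2, Nat.fib_add_two (n := s+1), Nat.fib_add_two (n := s)]
    ring

/-- index translation: lucas n = ltil (tau n) -/
def tau (n : ℕ) : ℕ := if n = 0 then 1 else if n = 1 then 0 else n

lemma ltil_tau (n : ℕ) : ltil (tau n) = lucas n := by
  match n with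
  | 0 => rfl
  | 1 => rfl
  | n + 2 => simp [tau, ltil_add_two]

lemma tau_lt {n a : ℕ} (ha : 2 ≤ a) (h : n < a) : tau n < a := by
  simp only [tau]; split <;> [omega; skip] <;> split <;> omega

-- pow sum bound helper
lemma pow_sum_bound (a : ℕ) : ∀ l : List ℕ, (∀ i ∈ l, i < a) →
    (l.map (2 ^ ·)).sum ≤ 2 ^ a * l.length
  | [], _ => by simp
  | x :: t, h => by
    simp only [List.map_cons, List.sum_cons, List.length_cons]
    have h1 : (2:ℕ) ^ x ≤ 2 ^ a := (Nat.pow_lt_pow_right one_lt_two (h x (by simp))).le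
    have h2 := pow_sum_bound a t (fun i hi => h i (by simp [hi]))
    calc 2^x + (t.map (2 ^ ·)).sum ≤ 2^a + 2^a * t.length := Nat.add_le_add h1 h2
    _ = 2^a * (t.length + 1) := by ring

lemma ltil_mem_le_sum {m : ℕ} {r : List ℕ} (h : m ∈ r) : ltil m ≤ (r.map ltil).sum :=
  List.single_le_sum (fun x _ => Nat.zero_le x) _ (List.mem_map_of_mem (f := ltil) h)

/-- stalling pair of ltil indices -/
def stall (i j : ℕ) : Prop :=
  (i + 2 ≤ j ∨ j + 2 ≤ i) ∧ ¬(i = 0 ∧ j = 2) ∧ ¬(i = 2 ∧ j = 0)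


lemma merge_eq (i : ℕ) :
    ∃ r : List ℕ, (∀ m ∈ r, ltil m ≤ ltil i + ltil i) ∧
      (r.map ltil).sum = ltil i + ltil i ∧
      (r.length ≤ 1 ∨ (r.length = 2 ∧ 2^i + 2^i < (r.map (2 ^ ·)).sum)) := by
  match i with
  | 0 => exact ⟨[1], by decide, by decide, Or.inl (by decide)⟩
  | 1 => exact ⟨[3], by decide, by decide, Or.inl (by decide)⟩
  | 2 => exact ⟨[3, 1], by decide, by decide, Or.inr (by decide)⟩
  | 3 => exact ⟨[4, 0], by decide, by decide, Or.inr (by decide)⟩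
  | (m + 4) =>
    have h1 : ltil (m+5) = ltil (m+4) + ltil (m+3) := ltil_rec (m+3) (by omega)
    have h2 : ltil (m+4) = ltil (m+3) + ltil (m+2) := ltil_rec (m+2) (by omega)
    refine ⟨[m + 5, m + 2], ?_, ?_, Or.inr ⟨rfl, ?_⟩⟩
    · intro x hx
      simp only [List.mem_cons, List.not_mem_nil, or_false] at hx
      rcases hx with rfl | rfl <;> omega
    · simp only [List.map_cons, List.map_nil, List.sum_cons, List.sum_nil]
      omega
    · simp only [List.map_cons, List.map_nil, List.sum_cons, List.sum_nil]
      have h3 : (2:ℕ)^(m+5) = 2 * 2^(m+4) := by ring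
      have h4 : (0:ℕ) < 2^(m+2) := Nat.pow_pos (by omega)
      omega

lemma merge_consec (i : ℕ) :
    ∃ r : List ℕ, (∀ m ∈ r, ltil m ≤ ltil i + ltil (i+1)) ∧
      (r.map ltil).sum = ltil i + ltil (i+1) ∧
      (r.length ≤ 1 ∨ (r.length = 2 ∧ 2^i + 2^(i+1) < (r.map (2 ^ ·)).sum)) := by
  match i with
  | 0 => exact ⟨[2], by decide, by decide, Or.inl (by decide)⟩
  | 1 => exact ⟨[3, 0], by decide, by decide, Or.inr (by decide)⟩
  | (m + 2) =>
    simp only [show m+2+1 = m+3 from rfl]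
    have key : ltil (m+4) = ltil (m+3) + ltil (m+2) := ltil_rec (m+2) (by omega)
    refine ⟨[m + 4], ?_, ?_, Or.inl (by simp)⟩
    · intro x hx
      simp only [List.mem_cons, List.not_mem_nil, or_false] at hx
      subst hx; omega
    · simp only [List.map_cons, List.map_nil, List.sum_cons, List.sum_nil]
      omega

lemma merge_pair_le {i j : ℕ} (hij : i ≤ j) (h : j ≤ i + 1 ∨ (i = 0 ∧ j = 2)) :
    ∃ r : List ℕ, (∀ m ∈ r, ltil m ≤ ltil i + ltil j) ∧
      (r.map ltil).sum = ltil i + ltil j ∧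
      (r.length ≤ 1 ∨ (r.length = 2 ∧ 2^i + 2^j < (r.map (2 ^ ·)).sum)) := by
  rcases h with h | ⟨rfl, rfl⟩
  · have hj : j = i ∨ j = i + 1 := by omega
    rcases hj with rfl | rfl
    · exact merge_eq _
    · exact merge_consec _
  · exact ⟨[3], by decide, by decide, Or.inl (by decide)⟩

lemma merge_pair {i j : ℕ} (h : ¬ stall i j) :
    ∃ r : List ℕ, (∀ m ∈ r, ltil m ≤ ltil i + ltil j) ∧
      (r.map ltil).sum = ltil i + ltil j ∧
      (r.length ≤ 1 ∨ (r.length = 2 ∧ 2^i + 2^j < (r.map (2 ^ ·)).sum)) := by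
  simp only [stall, not_and_or, not_or, not_not] at h
  rcases le_total i j with hij | hij
  · apply merge_pair_le hij
    rcases h with ⟨h1, h2⟩ | h | h
    · left; omega
    · right; exact h
    · omega
  · obtain ⟨r, h1, h2, h3⟩ := merge_pair_le hij (by
      rcases h with ⟨h1, h2⟩ | h | h
      · left; omega
      · omega
      · right; exact ⟨h.2, h.1⟩)
    exact ⟨r, by rwa [Nat.add_comm (ltil j)] at h1, by rwa [Nat.add_comm (ltil j)] at h2,
      by rwa [Nat.add_comm ((2:ℕ)^j)] at h3⟩

lemma extract_pair_le {a i j : ℕ} (ha : 2 ≤ a) (hi : i < a) (hj : j ≤ i)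
    (h : ltil a ≤ ltil i + ltil j) :
    ∃ r : List ℕ, (∀ m ∈ r, m < a) ∧ (r.map ltil).sum + ltil a = ltil i + ltil j ∧
      r.length ≤ 1 := by
  match a, ha with
  | 2, _ =>
    interval_cases i <;> interval_cases j <;>
      first
        | exact absurd h (by decide)
        | exact ⟨[], by decide, by decide, by decide⟩
        | exact ⟨[0], by decide, by decide, by decide⟩
  | 3, _ =>
    interval_cases i <;> interval_cases j <;>
      first
        | exact absurd h (by decide)
        | exact ⟨[], by decide, by decide, by decide⟩
        | exact ⟨[0], by decide, by decide, by decide⟩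
        | exact ⟨[1], by decide, by decide, by decide⟩
  | (b+4), _ =>
    have key1 : ltil (b+4) = ltil (b+3) + ltil (b+2) := ltil_rec (b+2) (by omega)
    have mono := ltil_strictMono
    have hi3 : i = b + 3 := by
      by_contra hne
      have hile : i ≤ b + 2 := by omega
      have h1 : ltil i ≤ ltil (b+2) := mono.monotone hile
      have h2 : ltil j ≤ ltil (b+2) := mono.monotone (le_trans hj hile)
      have h3 : ltil (b+2) < ltil (b+3) := mono (by omega)
      omega
    subst hi3
    have hj2 : j = b + 2 ∨ j = b + 3 := by
      by_contra hne
      have hjle : j ≤ b + 1 := by push_neg at hne; omega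
      have h1 : ltil j ≤ ltil (b+1) := mono.monotone hjle
      have h2 : ltil (b+1) < ltil (b+2) := mono (by omega)
      omega
    rcases hj2 with rfl | rfl
    · exact ⟨[], by simp, by simpa using key1, by simp⟩
    · refine ⟨[tau (b+1)], ?_, ?_, by simp⟩
      · intro m hm
        simp only [List.mem_cons, List.not_mem_nil, or_false] at hm
        subst hm
        exact tau_lt (by omega) (by omega)
      · simp only [List.map_cons, List.map_nil, List.sum_cons, List.sum_nil]
        rw [ltil_tau]
        have e1 : ltil (b+4) = lucas (b+4) := ltil_of_two_le (by omega)
        have e2 : ltil (b+3) = lucas (b+3) := ltil_of_two_le (by omega)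
        have r1 : lucas (b+4) = lucas (b+3) + lucas (b+2) := lucas_add_two (b+2)
        have r2 : lucas (b+3) = lucas (b+2) + lucas (b+1) := lucas_add_two (b+1)
        omega

lemma extract_pair {a i j : ℕ} (ha : 2 ≤ a) (hi : i < a) (hj : j < a)
    (h : ltil a ≤ ltil i + ltil j) :
    ∃ r : List ℕ, (∀ m ∈ r, m < a) ∧ (r.map ltil).sum + ltil a = ltil i + ltil j ∧
      r.length ≤ 1 := by
  rcases le_total j i with hji | hij
  · exact extract_pair_le ha hi hji h
  · obtain ⟨r, h1, h2, h3⟩ := extract_pair_le ha hj hij (by omega)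
    exact ⟨r, h1, by omega, h3⟩

lemma stall_sum_lt (m : ℕ) : ∀ F : Finset ℕ, (∀ i ∈ F, i ≤ m) →
    (∀ i ∈ F, ∀ j ∈ F, i ≠ j → (i+2 ≤ j ∨ j+2 ≤ i)) → ¬(0 ∈ F ∧ 2 ∈ F) →
    (∑ i ∈ F, ltil i) < ltil (m+1) := by
  induction m using Nat.strong_induction_on with
  | _ m IH =>
    match m with
    | 0 =>
      intro F hle _ _
      have hsub : F ⊆ {0} := fun i hi => by
        simp [Nat.le_zero.1 (hle i hi)]
      calc ∑ i ∈ F, ltil i ≤ ∑ i ∈ {0}, ltil i := Finset.sum_le_sum_of_subset hsub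
      _ < ltil 1 := by decide
    | 1 =>
      intro F hle hgap _
      by_cases h1 : 1 ∈ F
      · have h0 : 0 ∉ F := fun h0 => by have := hgap 0 h0 1 h1 (by omega); omega
        have hsub : F ⊆ {1} := fun i hi => by
          have hb := hle i hi
          interval_cases i
          · exact absurd hi h0
          · exact Finset.mem_singleton_self 1
        calc ∑ i ∈ F, ltil i ≤ ∑ i ∈ {1}, ltil i := Finset.sum_le_sum_of_subset hsub
        _ < ltil 2 := by decide
      · have hsub : F ⊆ {0} := fun i hi => by
          have hb := hle i hi
          interval_cases i
          · exact Finset.mem_singleton_self 0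
          · exact absurd hi h1
        calc ∑ i ∈ F, ltil i ≤ ∑ i ∈ {0}, ltil i := Finset.sum_le_sum_of_subset hsub
        _ < ltil 2 := by decide
    | 2 =>
      intro F hle hgap hexc
      by_cases h2 : 2 ∈ F
      · have h1 : 1 ∉ F := fun h1 => by have := hgap 1 h1 2 h2 (by omega); omega
        have h0 : 0 ∉ F := fun h0 => hexc ⟨h0, h2⟩
        have hsub : F ⊆ {2} := fun i hi => by
          have hb := hle i hi
          interval_cases i
          · exact absurd hi h0
          · exact absurd hi h1
          · exact Finset.mem_singleton_self 2
        calc ∑ i ∈ F, ltil i ≤ ∑ i ∈ {2}, ltil i := Finset.sum_le_sum_of_subset hsub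
        _ < ltil 3 := by decide
      · by_cases h1 : 1 ∈ F
        · have h0 : 0 ∉ F := fun h0 => by have := hgap 0 h0 1 h1 (by omega); omega
          have hsub : F ⊆ {1} := fun i hi => by
            have hb := hle i hi
            interval_cases i
            · exact absurd hi h0
            · exact Finset.mem_singleton_self 1
            · exact absurd hi h2
          calc ∑ i ∈ F, ltil i ≤ ∑ i ∈ {1}, ltil i := Finset.sum_le_sum_of_subset hsub
          _ < ltil 3 := by decide
        · have hsub : F ⊆ {0} := fun i hi => by
            have hb := hle i hi
            interval_cases i
            · exact Finset.mem_singleton_self 0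
            · exact absurd hi h1
            · exact absurd hi h2
          calc ∑ i ∈ F, ltil i ≤ ∑ i ∈ {0}, ltil i := Finset.sum_le_sum_of_subset hsub
          _ < ltil 3 := by decide
    | (m+3) =>
      intro F hle hgap hexc
      have hrec : ltil (m+4) = ltil (m+3) + ltil (m+2) := ltil_rec (m+2) (by omega)
      by_cases htop : (m+3) ∈ F
      · have hsum : ∑ i ∈ F, ltil i = ltil (m+3) + ∑ i ∈ F.erase (m+3), ltil i :=
          (Finset.add_sum_erase F ltil htop).symm
        have hF' : ∀ i ∈ F.erase (m+3), i ≤ m + 1 := by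
          intro i hi
          have hne := Finset.ne_of_mem_erase hi
          have hmem := Finset.mem_of_mem_erase hi
          have := hgap i hmem (m+3) htop hne
          have := hle i hmem
          omega
        have ih := IH (m+1) (by omega) (F.erase (m+3)) hF'
          (fun i hi j hj hne => hgap i (Finset.mem_of_mem_erase hi) j (Finset.mem_of_mem_erase hj) hne)
          (fun ⟨h0, h2⟩ => hexc ⟨Finset.mem_of_mem_erase h0, Finset.mem_of_mem_erase h2⟩)
        have ih2 : (∑ i ∈ F.erase (m+3), ltil i) < ltil (m+2) := ih
        show (∑ i ∈ F, ltil i) < ltil (m+4)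
        omega
      · have hF : ∀ i ∈ F, i ≤ m + 2 := by
          intro i hi
          have hb := hle i hi
          by_contra hcon
          have he : i = m + 3 := by omega
          exact htop (he ▸ hi)
        have ih := IH (m+2) (by omega) F hF hgap hexc
        have ih2 : (∑ i ∈ F, ltil i) < ltil (m+3) := ih
        have hlt : ltil (m+3) < ltil (m+4) := ltil_strictMono (by omega)
        show (∑ i ∈ F, ltil i) < ltil (m+4)
        omega


lemma sum_split {x y : ℕ} {l : List ℕ} (f : ℕ → ℕ) (hx : x ∈ l) (hy : y ∈ l.erase x) :
    (l.map f).sum = f x + f y + (((l.erase x).erase y).map f).sum ∧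
    l.length = ((l.erase x).erase y).length + 2 := by
  have p1 := List.perm_cons_erase hx
  have p2 := List.perm_cons_erase hy
  constructor
  · have e1 : (l.map f).sum = f x + ((l.erase x).map f).sum := by
      have := (p1.map f).sum_eq
      simpa using this
    have e2 : ((l.erase x).map f).sum = f y + (((l.erase x).erase y).map f).sum := by
      have := (p2.map f).sum_eq
      simpa using this
    omega
  · have e1 := p1.length_eq
    have e2 := p2.length_eq
    simp at e1 e2
    omega

lemma extract_step (a : ℕ) (ha : 2 ≤ a) :
    ∀ N : ℕ, ∀ l : List ℕ, 2 * 2^a * l.length ≤ N + (l.map (2 ^ ·)).sum →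
      (∀ i ∈ l, i < a) → ltil a ≤ (l.map ltil).sum →
      ∃ l' : List ℕ, (∀ i ∈ l', i < a) ∧
        (l'.map ltil).sum + ltil a = (l.map ltil).sum ∧ l'.length < l.length := by
  intro N
  induction N with
  | zero =>
    intro l hfuel hb hs
    exfalso
    have hb2 := pow_sum_bound a l hb
    have hpow : 0 < 2^a := Nat.pow_pos (by omega)
    have hlen : l.length = 0 := by nlinarith
    rw [List.eq_nil_of_length_eq_zero hlen] at hs
    simp at hs
    exact absurd hs (by have := ltil_pos a; omega)
  | succ N IH =>
    intro l hfuel hb hs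
    by_cases hP : ∃ x ∈ l, ∃ y ∈ l.erase x, ltil a ≤ ltil x + ltil y
    · obtain ⟨x, hx, y, hy, hxy⟩ := hP
      have hya : y < a := hb y (List.mem_of_mem_erase hy)
      obtain ⟨r, hr1, hr2, hr3⟩ := extract_pair ha (hb x hx) hya hxy
      obtain ⟨e1, e2⟩ := sum_split ltil hx hy
      refine ⟨r ++ ((l.erase x).erase y), ?_, ?_, ?_⟩
      · intro i hi
        rcases List.mem_append.1 hi with h | h
        · exact hr1 i h
        · exact hb i (List.mem_of_mem_erase (List.mem_of_mem_erase h))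
      · rw [List.map_append, List.sum_append]
        omega
      · rw [List.length_append]
        omega
    · push_neg at hP
      by_cases hQ : ∃ x ∈ l, ∃ y ∈ l.erase x, ¬ stall x y
      · obtain ⟨x, hx, y, hy, hns⟩ := hQ
        have hya : y < a := hb y (List.mem_of_mem_erase hy)
        have hxa : x < a := hb x hx
        have hlt : ltil x + ltil y < ltil a := hP x hx y hy
        obtain ⟨r, hr1, hr2, hr3⟩ := merge_pair hns
        obtain ⟨e1, e2⟩ := sum_split ltil hx hy
        obtain ⟨f1, f2⟩ := sum_split (2 ^ ·) hx hy
        have hl'b : ∀ i ∈ r ++ ((l.erase x).erase y), i < a := by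
          intro i hi
          rcases List.mem_append.1 hi with h | h
          · have := hr1 i h
            have : ltil i < ltil a := by omega
            exact ltil_strictMono.lt_iff_lt.1 this
          · exact hb i (List.mem_of_mem_erase (List.mem_of_mem_erase h))
        have hl's : (( r ++ ((l.erase x).erase y)).map ltil).sum = (l.map ltil).sum := by
          rw [List.map_append, List.sum_append]; omega
        have hpx : (2:ℕ)^x < 2^a := Nat.pow_lt_pow_right one_lt_two hxa
        have hpy : (2:ℕ)^y < 2^a := Nat.pow_lt_pow_right one_lt_two hya
        have hlen' : (r ++ ((l.erase x).erase y)).length ≤ l.length := by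
          rw [List.length_append]
          rcases hr3 with h | ⟨h, _⟩ <;> omega
        rw [f2] at hfuel
        have hexp : 2 * 2^a * (((l.erase x).erase y).length + 2)
            = 2 * 2^a * (((l.erase x).erase y).length + 1) + 2 * 2^a := by ring
        have hfuel' : 2 * 2^a * (r ++ ((l.erase x).erase y)).length ≤ N + ((r ++ ((l.erase x).erase y)).map (2 ^ ·)).sum := by
          rw [List.map_append, List.sum_append]
          rcases hr3 with h | ⟨h, h2⟩
          · have hlen2 : (r ++ ((l.erase x).erase y)).length ≤ ((l.erase x).erase y).length + 1 := by
              rw [List.length_append]; omega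
            have m1 : 2 * 2^a * (r ++ ((l.erase x).erase y)).length
                ≤ 2 * 2^a * (((l.erase x).erase y).length + 1) :=
              Nat.mul_le_mul_left _ hlen2
            omega
          · have hleneq : (r ++ ((l.erase x).erase y)).length = ((l.erase x).erase y).length + 2 := by
              rw [List.length_append]; omega
            rw [hleneq]
            omega
        obtain ⟨l'', g1, g2, g3⟩ := IH (r ++ ((l.erase x).erase y)) hfuel' hl'b (by omega)
        exact ⟨l'', g1, by omega, by omega⟩
      · push_neg at hQ
        exfalso
        have hnd : l.Nodup := by
          rw [List.nodup_iff_count_le_one]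
          intro x
          by_contra hc
          push_neg at hc
          have hx : x ∈ l := List.count_pos_iff.1 (by omega)
          have hx2 : x ∈ l.erase x := by
            have := List.count_erase_self (a := x) (l := l)
            exact List.count_pos_iff.1 (by omega)
          have := (hQ x hx x hx2).1
          omega
        have hsum : (∑ i ∈ l.toFinset, ltil i) = (l.map ltil).sum := List.sum_toFinset ltil hnd
        have hY := stall_sum_lt (a-1) l.toFinset
          (fun i hi => by have := hb i (List.mem_toFinset.1 hi); omega)
          (fun i hi j hj hne => (hQ i (List.mem_toFinset.1 hi) j
            (by rw [List.mem_erase_of_ne hne.symm]; exact List.mem_toFinset.1 hj)).1)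
          (fun ⟨h0, h2⟩ => by
            have := (hQ 0 (List.mem_toFinset.1 h0) 2
              (by rw [List.mem_erase_of_ne (by omega)]; exact List.mem_toFinset.1 h2)).2.1
            exact this ⟨rfl, rfl⟩)
        rw [hsum] at hY
        have : a - 1 + 1 = a := by omega
        rw [this] at hY
        omega

lemma tau_tau : ∀ n : ℕ, tau (tau n) = n
  | 0 => rfl
  | 1 => rfl
  | n + 2 => by simp [tau]

lemma lucas_tau (i : ℕ) : lucas (tau i) = ltil i := by
  rw [← ltil_tau (tau i), tau_tau]

lemma key_bound (a : ℕ) (ha : 2 ≤ a) :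
    ∀ s : ℕ, ∀ l : List ℕ, (l.map ltil).sum = s → (∀ i ∈ l, i < a) →
      beta (s % ltil a) ≤ l.length + s / ltil a := by
  intro s
  induction s using Nat.strong_induction_on with
  | _ s IH =>
    intro l hsum hb
    by_cases hlt : s < ltil a
    · rw [Nat.mod_eq_of_lt hlt, Nat.div_eq_of_lt hlt]
      have := beta_list_le l
      rw [hsum] at this
      omega
    · push_neg at hlt
      obtain ⟨l', hb', hsum', hlen'⟩ := extract_step a ha (2*2^a*l.length) l
        (Nat.le_add_right _ _) hb (by omega)
      have hpos := ltil_pos a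
      have hs' : (l'.map ltil).sum < s := by omega
      have ih := IH ((l'.map ltil).sum) hs' l' rfl hb'
      have hmod : s % ltil a = ((l'.map ltil).sum) % ltil a := by
        rw [← hsum, ← hsum', Nat.add_mod_right]
      have hdiv : s / ltil a = ((l'.map ltil).sum) / ltil a + 1 := by
        rw [← hsum, ← hsum', Nat.add_div_right _ hpos]
      rw [hmod, hdiv]
      omega

lemma decomp (a : ℕ) (ha : 2 ≤ a) :
    ∀ ns : List ℕ, ∃ (M : ℕ) (A : List ℕ), (∀ i ∈ A, i < a) ∧
      (ns.map lucas).sum = M * lucas a + (A.map ltil).sum ∧ A.length ≤ M + ns.length := by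
  intro ns
  induction ns with
  | nil => exact ⟨0, [], by simp, by simp, by simp⟩
  | cons n ns ih =>
    obtain ⟨M, A, hA, hsum, hlen⟩ := ih
    rcases Nat.lt_or_ge n a with hn | hn
    · refine ⟨M, tau n :: A, ?_, ?_, ?_⟩
      · intro i hi
        rcases List.mem_cons.1 hi with rfl | h
        · exact tau_lt ha hn
        · exact hA i h
      · simp only [List.map_cons, List.sum_cons, ltil_tau]
        omega
      · simp only [List.length_cons]; omega
    · obtain ⟨s, rfl⟩ := Nat.exists_eq_add_of_le hn
      have hfib := lucas_fib s a (by omega)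
      refine ⟨M + Nat.fib (s+1), List.replicate (Nat.fib s) (tau (a-1)) ++ A, ?_, ?_, ?_⟩
      · intro i hi
        rcases List.mem_append.1 hi with h | h
        · rw [List.eq_of_mem_replicate h]
          exact tau_lt ha (by omega)
        · exact hA i h
      · simp only [List.map_cons, List.sum_cons, List.map_append, List.sum_append,
          List.map_replicate, List.sum_replicate, smul_eq_mul, ltil_tau]
        rw [hfib]
        have e : (M + Nat.fib (s+1)) * lucas a = M * lucas a + Nat.fib (s+1) * lucas a := by
          ring
        omega
      · simp only [List.length_cons, List.length_append, List.length_replicate]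
        have := Nat.fib_le_fib_succ (n := s)
        omega

lemma mem_Sset_of (a : ℕ) : ∀ (ns : List ℕ) (m : ℕ), ns.length ≤ m →
    m * lucas a + (ns.map lucas).sum ∈ Sset a := by
  intro ns
  induction ns with
  | nil =>
    intro m _
    simp only [List.map_nil, List.sum_nil, Nat.add_zero]
    have hmem : lucas a ∈ Sset a :=
      AddSubmonoid.subset_closure (Set.mem_union_left _ rfl)
    have := AddSubmonoid.nsmul_mem _ hmem m
    simpa [smul_eq_mul] using this
  | cons n ns ih =>
    intro m hm
    simp only [List.length_cons] at hm
    obtain ⟨m', rfl⟩ : ∃ m', m = m' + 1 := ⟨m - 1, by omega⟩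
    have hgen : lucas a + lucas n ∈ Sset a :=
      AddSubmonoid.subset_closure (Set.mem_union_right _ ⟨n, rfl⟩)
    have heq : (m' + 1) * lucas a + ((n :: ns).map lucas).sum
        = (lucas a + lucas n) + (m' * lucas a + (ns.map lucas).sum) := by
      simp only [List.map_cons, List.sum_cons]
      ring
    rw [heq]
    exact AddSubmonoid.add_mem _ hgen (ih m' (by omega))

lemma Sset_decomp {a x : ℕ} (h : x ∈ Sset a) :
    ∃ (m : ℕ) (ns : List ℕ), ns.length ≤ m ∧ x = m * lucas a + (ns.map lucas).sum := by
  obtain ⟨gl, hgl, hsum⟩ := AddSubmonoid.exists_list_of_mem_closure h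
  subst hsum
  clear h
  induction gl with
  | nil => exact ⟨0, [], by simp, by simp⟩
  | cons g gl ih =>
    obtain ⟨m, ns, hlen, hsum⟩ := ih (fun y hy => hgl y (List.mem_cons_of_mem _ hy))
    have hg := hgl g List.mem_cons_self
    rcases hg with hg | ⟨n, rfl⟩
    · rw [Set.mem_singleton_iff] at hg
      subst hg
      refine ⟨m + 1, ns, by omega, ?_⟩
      simp only [List.sum_cons, hsum]
      ring
    · refine ⟨m + 1, n :: ns, by simpa using hlen, ?_⟩
      simp only [List.sum_cons, hsum, List.map_cons]
      ring

lemma mem_Sset_iff {a : ℕ} (ha : 2 ≤ a) (x : ℕ) :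
    x ∈ Sset a ↔ beta (x % lucas a) ≤ x / lucas a := by
  have hla : 0 < lucas a := lucas_pos a
  have hel : ltil a = lucas a := ltil_of_two_le ha
  constructor
  · intro h
    obtain ⟨m, ns, hlen, rfl⟩ := Sset_decomp h
    obtain ⟨M, A, hA, hsum, hAlen⟩ := decomp a ha ns
    rw [hsum]
    have heq : m * lucas a + (M * lucas a + (A.map ltil).sum)
        = (A.map ltil).sum + (m + M) * lucas a := by ring
    rw [heq]
    rw [Nat.add_mul_mod_self_right, Nat.add_mul_div_right _ _ hla]
    have hkey := key_bound a ha ((A.map ltil).sum) A rfl hA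
    rw [hel] at hkey
    omega
  · intro h
    have hrep := exists_beta_rep (x % lucas a)
    obtain ⟨k, b, hrep, hbeta⟩ := hrep
    obtain ⟨d, hd⟩ : ∃ d, x / lucas a = beta (x % lucas a) + d :=
      ⟨x / lucas a - beta (x % lucas a), by omega⟩
    have hx : x = (∑ i ∈ Finset.range (k+1), b i * (lucas a + ltil i)) + d * lucas a := by
      have e1 : ∑ i ∈ Finset.range (k+1), b i * (lucas a + ltil i)
          = (∑ i ∈ Finset.range (k+1), b i) * lucas a
            + ∑ i ∈ Finset.range (k+1), b i * ltil i := by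
        rw [Finset.sum_mul, ← Finset.sum_add_distrib]
        exact Finset.sum_congr rfl (fun i _ => by ring)
      rw [e1, ← hbeta, ← hrep]
      have e2 := Nat.div_add_mod x (lucas a)
      have e3 : lucas a * (x / lucas a) = beta (x % lucas a) * lucas a + d * lucas a := by
        rw [hd]; ring
      omega
    rw [hx]
    refine AddSubmonoid.add_mem _ (AddSubmonoid.sum_mem _ (fun i _ => ?_)) ?_
    · have hgen : lucas a + ltil i ∈ Sset a :=
        AddSubmonoid.subset_closure (Set.mem_union_right _ ⟨tau i, by rw [lucas_tau]⟩)
      have := AddSubmonoid.nsmul_mem _ hgen (b i)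
      simpa [smul_eq_mul] using this
    · have hmem : lucas a ∈ Sset a :=
        AddSubmonoid.subset_closure (Set.mem_union_left _ rfl)
      have := AddSubmonoid.nsmul_mem _ hmem d
      simpa [smul_eq_mul] using this

theorem genus_S_eq_sum_beta (a : ℕ) (ha : 2 ≤ a) :
    {x : ℕ | x ∉ Sset a}.ncard = ∑ x ∈ Finset.Ico 1 (lucas a), beta x := by
  classical
  have hla : 0 < lucas a := lucas_pos a
  have hset : {x : ℕ | x ∉ Sset a} =
      ↑((Finset.Ico 1 (lucas a)).biUnion
        (fun r => (Finset.range (beta r)).image (fun q => q * lucas a + r))) := by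
    ext x
    simp only [Set.mem_setOf_eq, Finset.coe_biUnion, Set.mem_iUnion, Finset.mem_coe,
      Finset.mem_image, Finset.mem_range, Finset.mem_Ico]
    constructor
    · intro hx
      have h := (mem_Sset_iff ha x).not.1 hx
      push_neg at h
      refine ⟨x % lucas a, ⟨?_, Nat.mod_lt x hla⟩, x / lucas a, h, ?_⟩
      · by_contra hr
        push_neg at hr
        have h0 : x % lucas a = 0 := by omega
        rw [h0, beta_zero] at h
        exact absurd h (Nat.not_lt_zero _)
      · have h2 := Nat.div_add_mod x (lucas a)
        rw [Nat.mul_comm] at h2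
        exact h2
    · rintro ⟨r, ⟨hr1, hr2⟩, q, hq, rfl⟩
      intro hmem
      have h := (mem_Sset_iff ha _).1 hmem
      have hmod : (q * lucas a + r) % lucas a = r := by
        rw [Nat.mul_comm, Nat.mul_add_mod, Nat.mod_eq_of_lt hr2]
      have hdiv : (q * lucas a + r) / lucas a = q := by
        rw [Nat.add_comm, Nat.add_mul_div_right _ _ hla, Nat.div_eq_of_lt hr2]
        omega
      rw [hmod, hdiv] at h
      omega
  rw [hset, Set.ncard_coe_finset]
  rw [Finset.card_biUnion]
  · refine Finset.sum_congr rfl (fun r _ => ?_)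
    rw [Finset.card_image_of_injective _ (fun q1 q2 h => by
      have : q1 * lucas a = q2 * lucas a := by omega
      exact Nat.eq_of_mul_eq_mul_right hla this)]
    exact Finset.card_range _
  · intro r hr s hs hrs
    rw [Function.onFun, Finset.disjoint_left]
    rintro u hu1 hu2
    simp only [Finset.mem_image, Finset.mem_range] at hu1 hu2
    obtain ⟨q1, _, he1⟩ := hu1
    obtain ⟨q2, _, he2⟩ := hu2
    rw [Finset.mem_coe, Finset.mem_Ico] at hr hs
    have h1 : u % lucas a = r := by
      rw [← he1, Nat.mul_comm, Nat.mul_add_mod, Nat.mod_eq_of_lt hr.2]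
    have h2 : u % lucas a = s := by
      rw [← he2, Nat.mul_comm, Nat.mul_add_mod, Nat.mod_eq_of_lt hs.2]
    exact hrs (by omega)
end

section
/- For all integers a ≥ 2 and k ≥ 2, the number k·l_a belongs to the additive submonoid of ℕ generated by {l_a + l_0, l_a + l_1, …, l_a + l_a}. -/
theorem mul_lucas_mem (a k : ℕ) (ha : 2 ≤ a) (hk : 2 ≤ k) :
    k * lucas a ∈
      AddSubmonoid.closure
        ((((Finset.range (a + 1)).image fun i => lucas a + lucas i : Finset ℕ)) : Set ℕ) := by

  obtain ⟨b, rfl⟩ : ∃ b, a = b + 2 := ⟨a - 2, by omega⟩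
  set C := AddSubmonoid.closure
        ((((Finset.range (b + 2 + 1)).image fun i => lucas (b+2) + lucas i : Finset ℕ)) : Set ℕ)
    with hC
  have hmem : ∀ i, i ≤ b + 2 → lucas (b+2) + lucas i ∈ C := by
    intro i hi
    apply AddSubmonoid.subset_closure
    simp only [Finset.coe_image, Set.mem_image, Finset.mem_coe, Finset.mem_range]
    exact ⟨i, by omega, rfl⟩
  have g2 : 2 * lucas (b+2) ∈ C := by
    have h := hmem (b+2) le_rfl
    have : 2 * lucas (b+2) = lucas (b+2) + lucas (b+2) := by ring
    rw [this]; exact h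
  have g3 : 3 * lucas (b+2) ∈ C := by
    have h1 := hmem (b+1) (by omega)
    have h2 := hmem b (by omega)
    have h := AddSubmonoid.add_mem _ h1 h2
    have : 3 * lucas (b+2) = (lucas (b+2) + lucas (b+1)) + (lucas (b+2) + lucas b) := by
      rw [show lucas (b+2) = lucas (b+1) + lucas b from rfl]; ring
    rw [this]; exact h
  rcases Nat.even_or_odd k with ⟨q, hq⟩ | ⟨q, hq⟩
  · subst hq
    have : (q + q) * lucas (b+2) = q • (2 * lucas (b+2)) := by
      simp only [smul_eq_mul]; ring
    rw [this]; exact AddSubmonoid.nsmul_mem _ g2 q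
  · subst hq
    obtain ⟨m, rfl⟩ : ∃ m, q = m + 1 := ⟨q - 1, by omega⟩
    have : (2*(m+1)+1) * lucas (b+2) = m • (2 * lucas (b+2)) + 3 * lucas (b+2) := by
      simp only [smul_eq_mul]; ring
    rw [this]
    exact AddSubmonoid.add_mem _ (AddSubmonoid.nsmul_mem _ g2 m) g3
end

section
/- Let a ≥ 3 be an integer. If x ∈ T(a) with x ≠ 0 and x ≠ l_a + l_1, then x + l_a ∈ T(a). -/
lemma gen_mem_T (a n : ℕ) : lucas a + lucas n ∈ Tset a :=
  AddSubmonoid.subset_closure ⟨n, rfl⟩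

theorem add_lucas_mem_T' (a : ℕ) (x : ℕ) (hx : x ∈ Tset a) :
    x = 0 ∨ x = lucas a + lucas 1 ∨ x + lucas a ∈ Tset a := by
  induction hx using AddSubmonoid.closure_induction with
  | mem g hg =>
    obtain ⟨n, rfl⟩ := hg
    match n with
    | 0 =>
      right; right
      have h : (lucas a + lucas 0) + lucas a
          = (lucas a + lucas 1) + (lucas a + lucas 1) := by
        simp [lucas]; omega
      rw [h]; exact add_mem (gen_mem_T a 1) (gen_mem_T a 1)
    | 1 => right; left; rfl
    | (m+2) =>
      right; right
      have h : (lucas a + lucas (m+2)) + lucas a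
          = (lucas a + lucas (m+1)) + (lucas a + lucas m) := by
        rw [show lucas (m+2) = lucas (m+1) + lucas m from rfl]; ring
      rw [h]; exact add_mem (gen_mem_T a (m+1)) (gen_mem_T a m)
  | zero => left; rfl
  | add x y hx hy ihx ihy =>
    rcases ihx with rfl | rfl | ihx
    · simpa using ihy
    · rcases ihy with rfl | rfl | ihy
      · right; left; simp
      · right; right
        have h : ((lucas a + lucas 1) + (lucas a + lucas 1)) + lucas a
            = (lucas a + lucas 0) + (lucas a + lucas a) := by
          simp [lucas]; omega
        rw [h]; exact add_mem (gen_mem_T a 0) (gen_mem_T a a)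
      · right; right
        have h : ((lucas a + lucas 1) + y) + lucas a
            = (y + lucas a) + (lucas a + lucas 1) := by ring
        rw [h]; exact add_mem ihy (gen_mem_T a 1)
    · right; right
      have h : (x + y) + lucas a = (x + lucas a) + y := by ring
      rw [h]; exact add_mem ihx hy

theorem add_lucas_mem_T (a : ℕ) (ha : 3 ≤ a) (x : ℕ) (hx : x ∈ Tset a)
    (h0 : x ≠ 0) (h1 : x ≠ lucas a + lucas 1) : x + lucas a ∈ Tset a := by
  rcases add_lucas_mem_T' a x hx with h | h | h
  · exact absurd h h0
  · exact absurd h h1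
  · exact h
end
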